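/- Let G be an abelian group and let Φ : G → Hom(Hom(G,ℤ), ℤ) be the natural evaluation map, Φ(g)(f) = f(g); assume Φ is bijective. Let H ≤ G be a direct summand of G such that for every g ∈ G with g ∉ H there exists a subgroup F ≤ G with: g ∈ F, F is a direct summand of G, H is a direct summand of F, and F/H is a free abelian group. Let H* = {f ∈ Hom(G,ℤ) : H ⊆ ker f} and H** = {φ ∈ Hom(Hom(G,ℤ),ℤ) : H* ⊆ ker φ}. Then Φ(H) = H**. -/

import Mathlib

/-- The annihilator `H* = {f ∈ Hom(G, A) | H ⊆ ker f}` of a subgroup `H ≤ G`,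
as a subgroup of the group `Hom(G, ℤ)`. -/
def ann {G : Type*} [AddCommGroup G] (H : AddSubgroup G) : AddSubgroup (G →+ ℤ) where
  carrier := {f | ∀ x ∈ H, f x = 0}
  zero_mem' := fun x _ => rfl
  add_mem' := by
    intro f g hf hg x hx
    simp [hf x hx, hg x hx]
  neg_mem' := by
    intro f hf x hx
    simp [hf x hx]

/-- The natural evaluation map `Φ : G → Hom(Hom(G, ℤ), ℤ)`, `Φ(g)(f) = f(g)`. -/
def evalHom {G : Type*} [AddCommGroup G] (g : G) : (G →+ ℤ) →+ ℤ where
  toFun f := f g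
  map_zero' := rfl
  map_add' _ _ := rfl

/-- **Double annihilator claim of the Remark on Kuz'minov's example.**
If `Φ : G → Hom(Hom(G,ℤ),ℤ)` is bijective, `H` is a direct summand of `G`, and every
`g ∉ H` lies in a direct summand `F` of `G` which contains `H` as a direct summand
with free quotient `F/H`, then `Φ(H) = H**`. -/
lemma mem_toIntSubmodule' {M : Type*} [AddCommGroup M] {S : AddSubgroup M} {x : M} :
    x ∈ AddSubgroup.toIntSubmodule S ↔ x ∈ S := Iff.rfl

theorem stmt10 (G : Type*) [AddCommGroup G]
    (hΦ : Function.Bijective (fun g : G => evalHom g))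
    (H : AddSubgroup G)
    (hsummand : ∃ C : AddSubgroup G, H ⊓ C = ⊥ ∧ H ⊔ C = ⊤)
    (hF : ∀ g : G, g ∉ H →
      ∃ F : AddSubgroup G, g ∈ F ∧
        (∃ C : AddSubgroup G, F ⊓ C = ⊥ ∧ F ⊔ C = ⊤) ∧
        H ≤ F ∧
        (∃ D : AddSubgroup G, D ≤ F ∧ H ⊓ D = ⊥ ∧ H ⊔ D = F) ∧
        Module.Free ℤ (F ⧸ H.addSubgroupOf F)) :
    (fun g : G => evalHom g) '' (H : Set G) =
      (ann (ann H) : Set ((G →+ ℤ) →+ ℤ)) := by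
  ext φ
  simp only [Set.mem_image, SetLike.mem_coe]
  constructor
  · rintro ⟨g, hg, rfl⟩
    intro f hf
    exact hf g hg
  · intro hφ
    obtain ⟨g, rfl⟩ := hΦ.2 φ
    refine ⟨g, ?_, rfl⟩
    by_contra hg
    obtain ⟨F, hgF, ⟨C, hFC, hFCtop⟩, hHF, ⟨D, hDF, hHD, hHDF⟩, hfree⟩ := hF g hg
    set D' : Submodule ℤ G := D.toIntSubmodule with hD'
    set K : Submodule ℤ G := H.toIntSubmodule ⊔ C.toIntSubmodule with hK
    have hcompl : IsCompl D' K := by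
      constructor
      · rw [disjoint_iff, Submodule.eq_bot_iff]
        rintro x hx
        obtain ⟨hxD, hxK⟩ := Submodule.mem_inf.1 hx
        obtain ⟨h, hh, c, hc, hhc⟩ := Submodule.mem_sup.1 hxK
        rw [mem_toIntSubmodule'] at hxD hh hc
        have hcF : c ∈ F ⊓ C := by
          refine AddSubgroup.mem_inf.2 ⟨?_, hc⟩
          have : c = x - h := by rw [← hhc]; abel
          rw [this]
          exact sub_mem (hDF hxD) (hHF hh)
        rw [hFC, AddSubgroup.mem_bot] at hcF
        have hxH : x ∈ H ⊓ D := by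
          refine AddSubgroup.mem_inf.2 ⟨?_, hxD⟩
          rw [← hhc, hcF, add_zero]; exact hh
        rw [hHD, AddSubgroup.mem_bot] at hxH
        exact hxH
      · rw [codisjoint_iff, eq_top_iff]
        rintro x -
        have : x ∈ F ⊔ C := by rw [hFCtop]; trivial
        obtain ⟨fe, hfe, c, hc, hfc⟩ := AddSubgroup.mem_sup.1 this
        rw [← hHDF] at hfe
        obtain ⟨h, hh, d, hd, hhd⟩ := AddSubgroup.mem_sup.1 hfe
        have hxeq : x = d + (h + c) := by rw [← hfc, ← hhd]; abel
        rw [hxeq]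
        exact Submodule.add_mem _ (Submodule.mem_sup_left (mem_toIntSubmodule'.2 hd))
          (Submodule.mem_sup_right (Submodule.add_mem _
            (Submodule.mem_sup_left (mem_toIntSubmodule'.2 hh))
            (Submodule.mem_sup_right (mem_toIntSubmodule'.2 hc))))
    set π : G →ₗ[ℤ] D' := Submodule.linearProjOfIsCompl D' K hcompl with hπ
    -- the inclusion of D' into F and the map to the quotient F/H
    let inc : D' →+ F :=
      { toFun := fun d => ⟨d.1, hDF (mem_toIntSubmodule'.1 d.2)⟩
        map_zero' := rfl
        map_add' := fun _ _ => rfl }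
    let ψ : D' →+ (F ⧸ H.addSubgroupOf F) :=
      (QuotientAddGroup.mk' (H.addSubgroupOf F)).comp inc
    haveI := hfree
    let b := Module.Free.chooseBasis ℤ (F ⧸ H.addSubgroupOf F)
    -- decompose g = h + d
    have hgHD : g ∈ H ⊔ D := by rw [hHDF]; exact hgF
    obtain ⟨h, hh, d, hd, hhd⟩ := AddSubgroup.mem_sup.1 hgHD
    have hdH : d ∉ H := fun hdmem => hg (by rw [← hhd]; exact add_mem hh hdmem)
    set d' : D' := ⟨d, mem_toIntSubmodule'.2 hd⟩ with hd'
    have hq : ψ d' ≠ 0 := by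
      intro h0
      apply hdH
      have := (QuotientAddGroup.eq_zero_iff (inc d')).1 h0
      exact this
    obtain ⟨i, hi⟩ : ∃ i, b.repr (ψ d') i ≠ 0 := by
      by_contra hcon
      push_neg at hcon
      apply hq
      have : b.repr (ψ d') = 0 := Finsupp.ext hcon
      simpa using congrArg b.repr.symm this
    set f : G →+ ℤ :=
      ((b.coord i).toAddMonoidHom.comp ψ).comp π.toAddMonoidHom with hf'
    have hfann : f ∈ ann H := by
      intro x hx
      have hxK : x ∈ K := Submodule.mem_sup_left (mem_toIntSubmodule'.2 hx)
      have : π x = 0 := Submodule.linearProjOfIsCompl_apply_right' hcompl hxK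
      simp [hf', this]
    have h0 : f g = 0 := hφ f hfann
    have hπg : π g = d' := by
      have h1 : π h = 0 := Submodule.linearProjOfIsCompl_apply_right' hcompl
        (Submodule.mem_sup_left (mem_toIntSubmodule'.2 hh))
      have h2 : π d = d' := by
        have := Submodule.linearProjOfIsCompl_apply_left hcompl d'
        exact this
      calc π g = π (h + d) := by rw [hhd]
        _ = π h + π d := map_add _ _ _
        _ = d' := by rw [h1, h2, zero_add]
    have hfg : f g = b.repr (ψ d') i := by
      simp [hf', hπg, Module.Basis.coord_apply]
    rw [hfg] at h0
    exact hi h0
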